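/- In the setting of the discrete three-gap lemma above, additionally there exist nonnegative integers d₁, d₂ such that as sets of integers [0,N₁) + τ₁r = [N−N₁, N) + d₁q', [N₂, N) + τ₂r = [0, N−N₂) + d₂q', and [N₁,N₂) + (τ₁+τ₂)r = [N−N₂, N−N₁) + (d₁+d₂)q'. -/
import Mathlib

lemma aux_W (q N u v b : ℕ) (hNq : N < q) (huv : u < v) (hvN : v ≤ N) (hb : b < q)
    (h : ∀ m, u ≤ m → m < v → (m + b) % q < N) : v + b ≤ N ∨ q ≤ u + b := by
  by_contra hc
  push_neg at hc
  obtain ⟨h1, h2⟩ := hc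
  rcases le_or_gt N (u + b) with h3 | h3
  · have := h u le_rfl huv
    rw [Nat.mod_eq_of_lt h2] at this
    omega
  · have hbN : b ≤ N := by omega
    have := h (N - b) (by omega) (by omega)
    have he : N - b + b = N := by omega
    rw [he, Nat.mod_eq_of_lt hNq] at this
    omega

lemma aux_block (q N u v b : ℕ) (hNq : N < q) (huv : u < v) (hvN : v ≤ N) (hb : b < q)
    (h : ∀ m, u ≤ m → m < v → (m + b) % q < N) :
    ∃ s, s + v ≤ N + u ∧ (u + b = s ∨ u + b = s + q) ∧
      ∀ m, u ≤ m → m < v → (m + b) % q = m - u + s := by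
  rcases aux_W q N u v b hNq huv hvN hb h with h1 | h1
  · refine ⟨u + b, by omega, Or.inl rfl, fun m hm hm' => ?_⟩
    rw [Nat.mod_eq_of_lt (by omega)]
    omega
  · refine ⟨u + b - q, by omega, Or.inr (by omega), fun m hm hm' => ?_⟩
    have h2 : (m + b) % q = m + b - q := by
      rw [Nat.mod_eq_sub_mod (by omega), Nat.mod_eq_of_lt (by omega)]
    omega

lemma aux_inj (q N r : ℕ) (hNq : N < q) (τ : ℕ → ℕ)
    (hτ : ∀ m, m < N → 1 ≤ τ m ∧ (m + τ m * r) % q < N ∧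
      ∀ ℓ, 1 ≤ ℓ → (m + ℓ * r) % q < N → τ m ≤ ℓ) :
    ∀ m m', m < N → m' < N → (m + τ m * r) % q = (m' + τ m' * r) % q → m = m' := by
  have key : ∀ m m', m < N → m' < N → τ m ≤ τ m' →
      (m + τ m * r) % q = (m' + τ m' * r) % q → m = m' := by
    intro m m' hm hm' hle heq
    rcases eq_or_lt_of_le hle with he | hlt
    · rw [he] at heq
      have h2 : m % q = m' % q := Nat.ModEq.add_right_cancel' _ heq
      rw [Nat.mod_eq_of_lt (show m < q by omega), Nat.mod_eq_of_lt (show m' < q by omega)] at h2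
      exact h2
    · exfalso
      have h1 := (hτ m hm).1
      have hdec : m' + τ m' * r = (m' + (τ m' - τ m) * r) + τ m * r := by
        have hr : (τ m' - τ m) * r + τ m * r = τ m' * r := by
          rw [← add_mul]
          congr 1
          omega
        omega
      rw [hdec] at heq
      have h2 : (m' + (τ m' - τ m) * r) % q = m % q := Nat.ModEq.add_right_cancel' _ heq.symm
      rw [Nat.mod_eq_of_lt (show m < q by omega)] at h2
      have h3 := (hτ m' hm').2.2 (τ m' - τ m) (by omega) (by rw [h2]; omega)
      omega
  intro m m' hm hm' heq
  rcases le_total (τ m) (τ m') with h | h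
  · exact key m m' hm hm' h heq
  · exact (key m' m hm' hm h heq.symm).symm

lemma aux_noZero (q N r : ℕ) (hN2 : 2 ≤ N) (hNq : N < q) (hcop : Nat.Coprime r q) (τ : ℕ → ℕ)
    (hτ : ∀ m, m < N → 1 ≤ τ m ∧ (m + τ m * r) % q < N ∧
      ∀ ℓ, 1 ≤ ℓ → (m + ℓ * r) % q < N → τ m ≤ ℓ)
    (hd : q ∣ τ 0 * r) : False := by
  have hq1 : 1 < q := by omega
  haveI : NeZero q := ⟨by omega⟩
  haveI : Fact (1 < q) := ⟨hq1⟩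
  have h0N : 0 < N := by omega
  have htle : τ 0 ≤ q := (hτ 0 h0N).2.2 q (by omega) (by
    rw [zero_add, Nat.mul_mod_right]
    omega)
  have ht1 := (hτ 0 h0N).1
  have hdvd : q ∣ τ 0 := (Nat.Coprime.dvd_of_dvd_mul_right hcop.symm hd)
  have hτ0 : τ 0 = q := Nat.le_antisymm htle (Nat.le_of_dvd (by omega) hdvd)
  set x : ZMod q := (((ZMod.unitOfCoprime r hcop)⁻¹ : (ZMod q)ˣ) : ZMod q) with hxdef
  have hx : x * (r : ZMod q) = 1 := by
    have h1 : ((ZMod.unitOfCoprime r hcop : (ZMod q)ˣ) : ZMod q) = r :=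
      ZMod.coe_unitOfCoprime r hcop
    rw [← h1, hxdef]
    exact_mod_cast (ZMod.unitOfCoprime r hcop).inv_mul
  have hcast : ((x.val : ℕ) : ZMod q) = x := ZMod.natCast_rightInverse x
  have hlr : (x.val * r) % q = 1 := by
    have h3 := ZMod.val_natCast (n := q) (x.val * r)
    have h2 : (((x.val * r : ℕ)) : ZMod q) = 1 := by
      push_cast
      rw [hcast, hx]
    rw [h2, ZMod.val_one] at h3
    omega
  have hl1 : 1 ≤ x.val := by
    rcases Nat.eq_zero_or_pos x.val with h | h
    · rw [h] at hlr
      simp at hlr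
    · exact h
  have hlq : x.val < q := x.val_lt
  have := (hτ 0 h0N).2.2 x.val hl1 (by rw [zero_add, hlr]; omega)
  omega

lemma aux_disj_iv (s t ls lt : ℕ)
    (h : Disjoint (Finset.Ico s (s + ls)) (Finset.Ico t (t + lt))) :
    ls = 0 ∨ lt = 0 ∨ s + ls ≤ t ∨ t + lt ≤ s := by
  by_contra hc
  push_neg at hc
  obtain ⟨h1, h2, h3, h4⟩ := hc
  have hm1 : max s t ∈ Finset.Ico s (s + ls) := Finset.mem_Ico.mpr ⟨by omega, by omega⟩
  have hm2 : max s t ∈ Finset.Ico t (t + lt) := Finset.mem_Ico.mpr ⟨by omega, by omega⟩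
  exact Finset.disjoint_left.mp h hm1 hm2

set_option maxHeartbeats 1600000 in
lemma aux_K (q N N₁ N₂ sA sM sC b₁ b₂ b₃ : ℕ) (hN : 1 ≤ N) (hNq : N < q)
    (h12 : N₁ ≤ N₂) (h2N : N₂ ≤ N)
    (hb1 : b₁ < q) (hb2 : b₂ < q) (hb3 : b₃ < q)
    (hrel : b₁ + b₂ = b₃ ∨ b₁ + b₂ = b₃ + q)
    (aA : (N₁ = 0 ∧ sA = 0) ∨ (0 < N₁ ∧ sA + N₁ ≤ N ∧ (b₁ = sA ∨ b₁ = sA + q)))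
    (aM : (N₂ ≤ N₁ ∧ sM = 0) ∨ (N₁ < N₂ ∧ sM + (N₂ - N₁) ≤ N ∧
      (N₁ + b₃ = sM ∨ N₁ + b₃ = sM + q)))
    (aC : (N ≤ N₂ ∧ sC = 0) ∨ (N₂ < N ∧ sC + (N - N₂) ≤ N ∧
      (N₂ + b₂ = sC ∨ N₂ + b₂ = sC + q)))
    (dAC : N₁ = 0 ∨ N - N₂ = 0 ∨ sA + N₁ ≤ sC ∨ sC + (N - N₂) ≤ sA)
    (dAM : N₁ = 0 ∨ N₂ - N₁ = 0 ∨ sA + N₁ ≤ sM ∨ sM + (N₂ - N₁) ≤ sA)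
    (dMC : N₂ - N₁ = 0 ∨ N - N₂ = 0 ∨ sM + (N₂ - N₁) ≤ sC ∨ sC + (N - N₂) ≤ sM)
    (h0mem : (sA ≤ 0 ∧ 0 < sA + N₁) ∨ (sM ≤ 0 ∧ 0 < sM + (N₂ - N₁)) ∨
      (sC ≤ 0 ∧ 0 < sC + (N - N₂)))
    (hN1mem : (sA ≤ N - 1 ∧ N - 1 < sA + N₁) ∨ (sM ≤ N - 1 ∧ N - 1 < sM + (N₂ - N₁)) ∨
      (sC ≤ N - 1 ∧ N - 1 < sC + (N - N₂)))
    (EA : ¬(0 < N₁ ∧ sA = 0 ∧ 2 ≤ N))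
    (EM : ¬(N₁ = 0 ∧ 0 < N₂ ∧ sM = 0 ∧ 2 ≤ N)) :
    (0 < N₁ → b₁ = N - N₁) ∧ (N₂ < N → N₂ + b₂ = 0 ∨ N₂ + b₂ = q) ∧
      (N₁ < N₂ → N₁ + b₃ = N - N₂ ∨ N₁ + b₃ = N - N₂ + q) := by
  omega

set_option maxHeartbeats 1600000 in
theorem discrete_three_gap_interval_exchange (q' N r τ₁ τ₂ N₁ N₂ : ℕ)
    (hN : 1 ≤ N) (hNq : N < q') (hr0 : 0 < r) (hr1 : r < q')
    (hcop : Nat.Coprime r q')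
    (hτ₁ : 0 < τ₁) (hτ₂ : 0 < τ₂) (h12 : N₁ ≤ N₂) (h2N : N₂ ≤ N)
    (τ : ℕ → ℕ)
    (hτ : ∀ m, m < N → 1 ≤ τ m ∧ (m + τ m * r) % q' < N ∧
      ∀ ℓ, 1 ≤ ℓ → (m + ℓ * r) % q' < N → τ m ≤ ℓ)
    (hstruct : ∀ m, m < N → τ m = if m < N₁ then τ₁ else if m < N₂ then τ₁ + τ₂ else τ₂) :
    ∃ d₁ d₂ : ℕ,
      (fun m => m + τ₁ * r) '' Set.Ico 0 N₁ = (fun m => m + d₁ * q') '' Set.Ico (N - N₁) N ∧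
      (fun m => m + τ₂ * r) '' Set.Ico N₂ N = (fun m => m + d₂ * q') '' Set.Ico 0 (N - N₂) ∧
      (fun m => m + (τ₁ + τ₂) * r) '' Set.Ico N₁ N₂
        = (fun m => m + (d₁ + d₂) * q') '' Set.Ico (N - N₂) (N - N₁) := by
  have hq0 : 0 < q' := by omega
  have h1N : N₁ ≤ N := le_trans h12 h2N
  set b₁ := τ₁ * r % q' with hb₁
  set b₂ := τ₂ * r % q' with hb₂
  set b₃ := (τ₁ + τ₂) * r % q' with hb₃
  have hb1 : b₁ < q' := hb₁ ▸ Nat.mod_lt _ hq0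
  have hb2 : b₂ < q' := hb₂ ▸ Nat.mod_lt _ hq0
  have hb3 : b₃ < q' := hb₃ ▸ Nat.mod_lt _ hq0
  have hτm : ∀ m, m < N → (m + τ m * r) % q' < N := fun m hm => (hτ m hm).2.1
  have hb3rel : b₁ + b₂ = b₃ ∨ b₁ + b₂ = b₃ + q' := by
    have h1 : (b₁ + b₂) % q' = b₃ := by
      rw [hb₁, hb₂, hb₃, Nat.mod_add_mod, Nat.add_mod_mod, ← add_mul]
    rcases le_or_gt q' (b₁ + b₂) with h | h
    · right
      rw [Nat.mod_eq_sub_mod h, Nat.mod_eq_of_lt (by omega)] at h1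
      omega
    · left
      rw [Nat.mod_eq_of_lt h] at h1
      omega
  -- block A
  obtain ⟨sA, hsA⟩ : ∃ sA, (N₁ = 0 ∧ sA = 0) ∨ (0 < N₁ ∧ sA + N₁ ≤ N ∧
      (b₁ = sA ∨ b₁ = sA + q') ∧ ∀ m, m < N₁ → (m + τ₁ * r) % q' = m + sA) := by
    rcases Nat.eq_zero_or_pos N₁ with h | h
    · exact ⟨0, Or.inl ⟨h, rfl⟩⟩
    · obtain ⟨s, hs1, hs2, hs3⟩ := aux_block q' N 0 N₁ b₁ hNq h h1N hb1 (fun m _ hm => by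
        have hmN : m < N := by omega
        have ht := hstruct m hmN
        rw [if_pos hm] at ht
        have h2 := hτm m hmN
        rw [ht] at h2
        rw [hb₁, Nat.add_mod_mod]
        exact h2)
      refine ⟨s, Or.inr ⟨h, by omega, by omega, fun m hm => ?_⟩⟩
      have h3 := hs3 m (Nat.zero_le m) hm
      rw [hb₁, Nat.add_mod_mod] at h3
      omega
  -- block M
  obtain ⟨sM, hsM⟩ : ∃ sM, (N₂ ≤ N₁ ∧ sM = 0) ∨ (N₁ < N₂ ∧ sM + (N₂ - N₁) ≤ N ∧
      (N₁ + b₃ = sM ∨ N₁ + b₃ = sM + q') ∧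
      ∀ m, N₁ ≤ m → m < N₂ → (m + (τ₁ + τ₂) * r) % q' = (m - N₁) + sM) := by
    rcases le_or_gt N₂ N₁ with h | h
    · exact ⟨0, Or.inl ⟨h, rfl⟩⟩
    · obtain ⟨s, hs1, hs2, hs3⟩ := aux_block q' N N₁ N₂ b₃ hNq h h2N hb3 (fun m hm hm' => by
        have hmN : m < N := by omega
        have ht := hstruct m hmN
        rw [if_neg (by omega), if_pos hm'] at ht
        have h2 := hτm m hmN
        rw [ht] at h2
        rw [hb₃, Nat.add_mod_mod]
        exact h2)
      refine ⟨s, Or.inr ⟨h, by omega, hs2, fun m hm hm' => ?_⟩⟩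
      have h3 := hs3 m hm hm'
      rw [hb₃, Nat.add_mod_mod] at h3
      omega
  -- block C
  obtain ⟨sC, hsC⟩ : ∃ sC, (N ≤ N₂ ∧ sC = 0) ∨ (N₂ < N ∧ sC + (N - N₂) ≤ N ∧
      (N₂ + b₂ = sC ∨ N₂ + b₂ = sC + q') ∧
      ∀ m, N₂ ≤ m → m < N → (m + τ₂ * r) % q' = (m - N₂) + sC) := by
    rcases le_or_gt N N₂ with h | h
    · exact ⟨0, Or.inl ⟨h, rfl⟩⟩
    · obtain ⟨s, hs1, hs2, hs3⟩ := aux_block q' N N₂ N b₂ hNq h le_rfl hb2 (fun m hm hm' => by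
        have ht := hstruct m hm'
        rw [if_neg (by omega), if_neg (by omega)] at ht
        have h2 := hτm m hm'
        rw [ht] at h2
        rw [hb₂, Nat.add_mod_mod]
        exact h2)
      refine ⟨s, Or.inr ⟨h, by omega, hs2, fun m hm hm' => ?_⟩⟩
      have h3 := hs3 m hm hm'
      rw [hb₂, Nat.add_mod_mod] at h3
      omega
  -- disjointness
  have hdAC : Disjoint (Finset.Ico sA (sA + N₁)) (Finset.Ico sC (sC + (N - N₂))) := by
    rw [Finset.disjoint_left]
    intro x hx hx'
    rw [Finset.mem_Ico] at hx hx'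
    rcases hsA with ⟨h0, _⟩ | ⟨hposA, hleA, _, hfA⟩
    · omega
    rcases hsC with ⟨h0, _⟩ | ⟨hposC, hleC, _, hfC⟩
    · omega
    have e1 : (x - sA + τ₁ * r) % q' = x := by
      rw [hfA (x - sA) (by omega)]
      omega
    have e2 : ((N₂ + (x - sC)) + τ₂ * r) % q' = x := by
      rw [hfC (N₂ + (x - sC)) (by omega) (by omega)]
      omega
    have t1 : τ (x - sA) = τ₁ := by
      rw [hstruct _ (by omega), if_pos (by omega)]
    have t2 : τ (N₂ + (x - sC)) = τ₂ := by
      rw [hstruct _ (by omega), if_neg (by omega), if_neg (by omega)]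
    have := aux_inj q' N r hNq τ hτ (x - sA) (N₂ + (x - sC)) (by omega) (by omega)
      (by rw [t1, t2, e1, e2])
    omega
  have hdAM : Disjoint (Finset.Ico sA (sA + N₁)) (Finset.Ico sM (sM + (N₂ - N₁))) := by
    rw [Finset.disjoint_left]
    intro x hx hx'
    rw [Finset.mem_Ico] at hx hx'
    rcases hsA with ⟨h0, _⟩ | ⟨hposA, hleA, _, hfA⟩
    · omega
    rcases hsM with ⟨h0, _⟩ | ⟨hposM, hleM, _, hfM⟩
    · omega
    have e1 : (x - sA + τ₁ * r) % q' = x := by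
      rw [hfA (x - sA) (by omega)]
      omega
    have e2 : ((N₁ + (x - sM)) + (τ₁ + τ₂) * r) % q' = x := by
      rw [hfM (N₁ + (x - sM)) (by omega) (by omega)]
      omega
    have t1 : τ (x - sA) = τ₁ := by
      rw [hstruct _ (by omega), if_pos (by omega)]
    have t2 : τ (N₁ + (x - sM)) = τ₁ + τ₂ := by
      rw [hstruct _ (by omega), if_neg (by omega), if_pos (by omega)]
    have := aux_inj q' N r hNq τ hτ (x - sA) (N₁ + (x - sM)) (by omega) (by omega)
      (by rw [t1, t2, e1, e2])
    omega
  have hdMC : Disjoint (Finset.Ico sM (sM + (N₂ - N₁))) (Finset.Ico sC (sC + (N - N₂))) := by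
    rw [Finset.disjoint_left]
    intro x hx hx'
    rw [Finset.mem_Ico] at hx hx'
    rcases hsM with ⟨h0, _⟩ | ⟨hposM, hleM, _, hfM⟩
    · omega
    rcases hsC with ⟨h0, _⟩ | ⟨hposC, hleC, _, hfC⟩
    · omega
    have e1 : ((N₁ + (x - sM)) + (τ₁ + τ₂) * r) % q' = x := by
      rw [hfM (N₁ + (x - sM)) (by omega) (by omega)]
      omega
    have e2 : ((N₂ + (x - sC)) + τ₂ * r) % q' = x := by
      rw [hfC (N₂ + (x - sC)) (by omega) (by omega)]
      omega
    have t1 : τ (N₁ + (x - sM)) = τ₁ + τ₂ := by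
      rw [hstruct _ (by omega), if_neg (by omega), if_pos (by omega)]
    have t2 : τ (N₂ + (x - sC)) = τ₂ := by
      rw [hstruct _ (by omega), if_neg (by omega), if_neg (by omega)]
    have := aux_inj q' N r hNq τ hτ (N₁ + (x - sM)) (N₂ + (x - sC)) (by omega) (by omega)
      (by rw [t1, t2, e1, e2])
    omega
  have bA : sA + N₁ ≤ N := by rcases hsA with ⟨h, h'⟩ | ⟨_, h, _, _⟩ <;> omega
  have bM : sM + (N₂ - N₁) ≤ N := by rcases hsM with ⟨h, h'⟩ | ⟨_, h, _, _⟩ <;> omega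
  have bC : sC + (N - N₂) ≤ N := by rcases hsC with ⟨h, h'⟩ | ⟨_, h, _, _⟩ <;> omega
  have hdAMC : Disjoint (Finset.Ico sA (sA + N₁) ∪ Finset.Ico sM (sM + (N₂ - N₁)))
      (Finset.Ico sC (sC + (N - N₂))) := Finset.disjoint_union_left.mpr ⟨hdAC, hdMC⟩
  have hunion : (Finset.Ico sA (sA + N₁) ∪ Finset.Ico sM (sM + (N₂ - N₁))) ∪
      Finset.Ico sC (sC + (N - N₂)) = Finset.Ico 0 N := by
    apply Finset.eq_of_subset_of_card_le
    · intro x hx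
      simp only [Finset.mem_union, Finset.mem_Ico] at hx ⊢
      omega
    · rw [Finset.card_union_of_disjoint hdAMC, Finset.card_union_of_disjoint hdAM]
      simp only [Nat.card_Ico]
      omega
  have h0mem : (sA ≤ 0 ∧ 0 < sA + N₁) ∨ (sM ≤ 0 ∧ 0 < sM + (N₂ - N₁)) ∨
      (sC ≤ 0 ∧ 0 < sC + (N - N₂)) := by
    have h : (0 : ℕ) ∈ (Finset.Ico sA (sA + N₁) ∪ Finset.Ico sM (sM + (N₂ - N₁))) ∪
        Finset.Ico sC (sC + (N - N₂)) := by
      rw [hunion]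
      exact Finset.mem_Ico.mpr ⟨le_rfl, hN⟩
    simp only [Finset.mem_union, Finset.mem_Ico] at h
    omega
  have hN1mem : (sA ≤ N - 1 ∧ N - 1 < sA + N₁) ∨ (sM ≤ N - 1 ∧ N - 1 < sM + (N₂ - N₁)) ∨
      (sC ≤ N - 1 ∧ N - 1 < sC + (N - N₂)) := by
    have h : (N - 1 : ℕ) ∈ (Finset.Ico sA (sA + N₁) ∪ Finset.Ico sM (sM + (N₂ - N₁))) ∪
        Finset.Ico sC (sC + (N - N₂)) := by
      rw [hunion]
      exact Finset.mem_Ico.mpr ⟨Nat.zero_le _, by omega⟩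
    simp only [Finset.mem_union, Finset.mem_Ico] at h
    omega
  -- exclusions
  have EA : ¬(0 < N₁ ∧ sA = 0 ∧ 2 ≤ N) := by
    rintro ⟨h1, h2, h3⟩
    rcases hsA with ⟨h, _⟩ | ⟨_, _, hcong, _⟩
    · omega
    have hb0 : b₁ = 0 := by omega
    have ht : τ 0 = τ₁ := by rw [hstruct 0 (by omega), if_pos h1]
    refine aux_noZero q' N r h3 hNq hcop τ hτ ?_
    rw [ht]
    rw [hb₁] at hb0
    exact Nat.dvd_of_mod_eq_zero hb0
  have EM : ¬(N₁ = 0 ∧ 0 < N₂ ∧ sM = 0 ∧ 2 ≤ N) := by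
    rintro ⟨h1, h2, h3, h4⟩
    rcases hsM with ⟨h, _⟩ | ⟨_, _, hcong, _⟩
    · omega
    have hb0 : b₃ = 0 := by omega
    have ht : τ 0 = τ₁ + τ₂ := by
      rw [hstruct 0 (by omega), if_neg (by omega), if_pos (by omega)]
    refine aux_noZero q' N r h4 hNq hcop τ hτ ?_
    rw [ht]
    rw [hb₃] at hb0
    exact Nat.dvd_of_mod_eq_zero hb0
  -- arithmetic-only versions
  have aA : (N₁ = 0 ∧ sA = 0) ∨ (0 < N₁ ∧ sA + N₁ ≤ N ∧ (b₁ = sA ∨ b₁ = sA + q')) := by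
    rcases hsA with ⟨h, h'⟩ | ⟨h, h', h'', _⟩
    · exact Or.inl ⟨h, h'⟩
    · exact Or.inr ⟨h, h', h''⟩
  have aM : (N₂ ≤ N₁ ∧ sM = 0) ∨ (N₁ < N₂ ∧ sM + (N₂ - N₁) ≤ N ∧
      (N₁ + b₃ = sM ∨ N₁ + b₃ = sM + q')) := by
    rcases hsM with ⟨h, h'⟩ | ⟨h, h', h'', _⟩
    · exact Or.inl ⟨h, h'⟩
    · exact Or.inr ⟨h, h', h''⟩
  have aC : (N ≤ N₂ ∧ sC = 0) ∨ (N₂ < N ∧ sC + (N - N₂) ≤ N ∧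
      (N₂ + b₂ = sC ∨ N₂ + b₂ = sC + q')) := by
    rcases hsC with ⟨h, h'⟩ | ⟨h, h', h'', _⟩
    · exact Or.inl ⟨h, h'⟩
    · exact Or.inr ⟨h, h', h''⟩
  have dAC := aux_disj_iv _ _ _ _ hdAC
  have dAM := aux_disj_iv _ _ _ _ hdAM
  have dMC := aux_disj_iv _ _ _ _ hdMC
  obtain ⟨hBA, hBC, hBM⟩ := aux_K q' N N₁ N₂ sA sM sC b₁ b₂ b₃ hN hNq h12 h2N hb1 hb2 hb3
    hb3rel aA aM aC dAC dAM dMC h0mem hN1mem EA EM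
  clear hsA hsM hsC aA aM aC dAC dAM dMC h0mem hN1mem EA EM hdAMC hunion hdAC hdAM hdMC
    bA bM bC hb3rel hτm hτ hstruct
  obtain ⟨D1, hD1⟩ : ∃ d, d * q' + b₁ = τ₁ * r := ⟨τ₁ * r / q', by
    rw [hb₁]; exact Nat.div_add_mod' _ _⟩
  obtain ⟨D2, hD2⟩ : ∃ d, d * q' + b₂ = τ₂ * r := ⟨τ₂ * r / q', by
    rw [hb₂]; exact Nat.div_add_mod' _ _⟩
  obtain ⟨D3, hD3⟩ : ∃ d, d * q' + b₃ = (τ₁ + τ₂) * r := ⟨(τ₁ + τ₂) * r / q', by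
    rw [hb₃]; exact Nat.div_add_mod' _ _⟩
  have hmul : (τ₁ + τ₂) * r = τ₁ * r + τ₂ * r := add_mul _ _ _
  obtain ⟨d₁, d₂, P1, P2, P3⟩ : ∃ d₁ d₂ : ℕ,
      (N₁ = 0 ∨ τ₁ * r = (N - N₁) + d₁ * q') ∧
      (N₂ = N ∨ N₂ + τ₂ * r = d₂ * q') ∧
      (N₁ = N₂ ∨ N₁ + (τ₁ + τ₂) * r = (N - N₂) + (d₁ + d₂) * q') := by
    have hE2 : N₂ < N → ∃ d, N₂ + τ₂ * r = d * q' := by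
      intro h
      rcases hBC h with h' | h'
      · exact ⟨D2, by omega⟩
      · refine ⟨D2 + 1, ?_⟩
        have h5 : (D2 + 1) * q' = D2 * q' + q' := by ring
        omega
    have hE3 : N₁ < N₂ → ∃ e, N₁ + (τ₁ + τ₂) * r = (N - N₂) + e * q' := by
      intro h
      rcases hBM h with h' | h'
      · exact ⟨D3, by omega⟩
      · refine ⟨D3 + 1, ?_⟩
        have h5 : (D3 + 1) * q' = D3 * q' + q' := by ring
        omega
    have hE1 : 0 < N₁ → τ₁ * r = (N - N₁) + D1 * q' := by
      intro h
      have := hBA h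
      omega
    rcases Nat.eq_zero_or_pos N₁ with h1 | h1
    · rcases eq_or_lt_of_le h2N with h2 | h2
      · obtain ⟨e, he⟩ := hE3 (by omega)
        refine ⟨e, 0, Or.inl h1, Or.inl h2, Or.inr ?_⟩
        have h5 : (e + 0) * q' = e * q' := by ring
        omega
      · obtain ⟨d₂, hd₂⟩ := hE2 h2
        rcases Nat.eq_zero_or_pos N₂ with h3 | h3
        · exact ⟨0, d₂, Or.inl h1, Or.inr hd₂, Or.inl (by omega)⟩
        · obtain ⟨e, he⟩ := hE3 (by omega)
          have hle : d₂ ≤ e := by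
            by_contra hc
            have h4 : (e + 1) * q' ≤ d₂ * q' := Nat.mul_le_mul_right q' (by omega)
            have h5 : (e + 1) * q' = e * q' + q' := by ring
            omega
          refine ⟨e - d₂, d₂, Or.inl h1, Or.inr hd₂, Or.inr ?_⟩
          have h6 : (e - d₂ + d₂) * q' = e * q' := by
            rw [show e - d₂ + d₂ = e by omega]
          omega
    · rcases eq_or_lt_of_le h2N with h2 | h2
      · rcases eq_or_lt_of_le h12 with h3 | h3
        · exact ⟨D1, 0, Or.inr (hE1 h1), Or.inl h2, Or.inl h3⟩
        · obtain ⟨e, he⟩ := hE3 h3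
          have hE1' := hE1 h1
          have hpos : 0 < τ₂ * r := Nat.mul_pos hτ₂ hr0
          have hle : D1 + 1 ≤ e := by
            by_contra hc
            have h4 : e * q' ≤ D1 * q' := Nat.mul_le_mul_right q' (by omega)
            omega
          refine ⟨D1, e - D1, Or.inr hE1', Or.inl h2, Or.inr ?_⟩
          have h6 : (D1 + (e - D1)) * q' = e * q' := by
            rw [show D1 + (e - D1) = e by omega]
          omega
      · obtain ⟨d₂, hd₂⟩ := hE2 h2
        have hE1' := hE1 h1
        refine ⟨D1, d₂, Or.inr hE1', Or.inr hd₂, ?_⟩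
        rcases eq_or_lt_of_le h12 with h3 | h3
        · exact Or.inl h3
        · refine Or.inr ?_
          have h6 : (D1 + d₂) * q' = D1 * q' + d₂ * q' := add_mul _ _ _
          omega
  refine ⟨d₁, d₂, ?_, ?_, ?_⟩
  · rcases P1 with h | h
    · rw [h]
      simp
    · rw [Set.image_add_const_Ico, Set.image_add_const_Ico]
      rw [show (0 : ℕ) + τ₁ * r = N - N₁ + d₁ * q' by omega,
        show N₁ + τ₁ * r = N + d₁ * q' by omega]
  · rcases P2 with h | h
    · rw [h]
      simp
    · rw [Set.image_add_const_Ico, Set.image_add_const_Ico]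
      rw [show N₂ + τ₂ * r = 0 + d₂ * q' by omega,
        show N + τ₂ * r = N - N₂ + d₂ * q' by omega]
  · rcases P3 with h | h
    · rw [h]
      simp
    · rw [Set.image_add_const_Ico, Set.image_add_const_Ico]
      rw [show N₁ + (τ₁ + τ₂) * r = N - N₂ + (d₁ + d₂) * q' by omega,
        show N₂ + (τ₁ + τ₂) * r = N - N₁ + (d₁ + d₂) * q' by omega]
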